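/- Every integer matrix A can be transformed by left-multiplication by a unimodular integer matrix U into a matrix H in row-style Hermite Normal Form: H is upper-triangular in the staircase sense (pivots strictly move right down the rows), each pivot is positive, entries above a pivot are nonnegative and strictly less than the pivot, and entries below a pivot are zero. -/

import Mathlib

/-- `j` is the pivot column of row `i` of `H`: the first nonzero entry. -/
def IsPivot {m n : ℕ} (H : Matrix (Fin m) (Fin n) ℤ) (i : Fin m) (j : Fin n) : Prop :=
  H i j ≠ 0 ∧ ∀ j' : Fin n, j' < j → H i j' = 0

/-- `H` is in row-style Hermite Normal Form. -/
def IsHermiteNF {m n : ℕ} (H : Matrix (Fin m) (Fin n) ℤ) : Prop :=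
  (∀ (i : Fin m) (j : Fin n), IsPivot H i j →
      0 < H i j ∧
      (∀ i' : Fin m, i' < i → 0 ≤ H i' j ∧ H i' j < H i j) ∧
      (∀ i' : Fin m, i < i' → H i' j = 0) ∧
      (∀ (i₂ : Fin m) (j₂ : Fin n), i < i₂ → IsPivot H i₂ j₂ → j < j₂)) ∧
  (∀ i i' : Fin m, i < i' → (∀ j, H i j = 0) → ∀ j, H i' j = 0)

namespace HNF

/-- Block matrix [[c, 0], [0, V]]. -/
def cons0 {k : ℕ} (c : ℤ) (V : Matrix (Fin k) (Fin k) ℤ) : Matrix (Fin (k+1)) (Fin (k+1)) ℤ :=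
  Matrix.of (Fin.cons (Fin.cons c 0) (fun i => Fin.cons 0 (V i)))

@[simp] lemma cons0_zero_zero {k : ℕ} (c : ℤ) (V : Matrix (Fin k) (Fin k) ℤ) :
    cons0 c V 0 0 = c := rfl

lemma det_cons0 {k : ℕ} (c : ℤ) (V : Matrix (Fin k) (Fin k) ℤ) :
    (cons0 c V).det = c * V.det := by
  rw [Matrix.det_succ_row_zero, Fin.sum_univ_succ]
  have h0 : ∀ j : Fin k, cons0 c V 0 j.succ = 0 := fun j => by
    simp [cons0, Fin.cons_succ]
  simp [h0, cons0]
  left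
  congr 1

lemma cons0_mul_zero {k n : ℕ} (c : ℤ) (V : Matrix (Fin k) (Fin k) ℤ)
    (B : Matrix (Fin (k+1)) (Fin n) ℤ) (j : Fin n) :
    (cons0 c V * B) 0 j = c * B 0 j := by
  rw [Matrix.mul_apply, Fin.sum_univ_succ]
  simp [cons0, Fin.cons_succ]

lemma cons0_mul_succ {k n : ℕ} (c : ℤ) (V : Matrix (Fin k) (Fin k) ℤ)
    (B : Matrix (Fin (k+1)) (Fin n) ℤ) (i : Fin k) (j : Fin n) :
    (cons0 c V * B) i.succ j = ∑ l, V i l * B l.succ j := by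
  rw [Matrix.mul_apply, Fin.sum_univ_succ]
  simp [cons0, Fin.cons_succ]

lemma cons0_mulVec {k : ℕ} (c : ℤ) (V : Matrix (Fin k) (Fin k) ℤ) (v : Fin (k+1) → ℤ) :
    (cons0 c V).mulVec v = Fin.cons (c * v 0) (V.mulVec (fun i => v i.succ)) := by
  funext i
  refine Fin.cases ?_ (fun i => ?_) i
  · show ∑ j, cons0 c V 0 j * v j = _
    rw [Fin.sum_univ_succ]
    simp [cons0, Fin.cons_succ]
  · show ∑ j, cons0 c V i.succ j * v j = _
    rw [Fin.sum_univ_succ]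
    simp [cons0, Fin.cons_succ, Matrix.mulVec, dotProduct]


lemma succ_succ_ne_one {k : ℕ} (i : Fin k) : (i.succ.succ : Fin (k+2)) ≠ 1 := by
  simp [Fin.ext_iff]

/-- Matrix acting as [[x,y],[-b',a']] on the first two coordinates, identity elsewhere. -/
def bez (k : ℕ) (x y b' a' : ℤ) : Matrix (Fin (k+2)) (Fin (k+2)) ℤ :=
  Matrix.of (Fin.cons (Fin.cons x (Fin.cons y 0))
    (Fin.cons (Fin.cons (-b') (Fin.cons a' 0))
      (fun i => (1 : Matrix (Fin (k+2)) (Fin (k+2)) ℤ) i.succ.succ)))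

lemma det_bez (k : ℕ) (x y b' a' : ℤ) : (bez k x y b' a').det = x * a' + y * b' := by
  rw [Matrix.det_succ_row_zero, Fin.sum_univ_succ, Fin.sum_univ_succ]
  have h0 : ∀ j : Fin k, bez k x y b' a' 0 j.succ.succ = 0 := by
    intro j; simp [bez, Fin.cons_succ]
  have m0 : (bez k x y b' a').submatrix Fin.succ ((0:Fin (k+2)).succAbove)
      = cons0 a' (1 : Matrix (Fin k) (Fin k) ℤ) := by
    ext i j
    refine Fin.cases ?_ (fun i => ?_) i <;> refine Fin.cases ?_ (fun j => ?_) j <;>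
      simp [bez, cons0, Fin.zero_succAbove, Fin.cons_succ, Matrix.one_apply, Fin.succ_inj, succ_succ_ne_one, Fin.succ_ne_zero]
  have hsa0 : ((1:Fin (k+2)).succAbove 0) = 0 := rfl
  have hsas : ∀ j : Fin k, ((1:Fin (k+2)).succAbove j.succ) = j.succ.succ := by
    intro j
    apply Fin.succAbove_of_le_castSucc
    rw [Fin.le_def]
    simp
  have m1 : (bez k x y b' a').submatrix Fin.succ (((0:Fin (k+1)).succ).succAbove)
      = cons0 (-b') (1 : Matrix (Fin k) (Fin k) ℤ) := by
    have h1 : ((0:Fin (k+1)).succ : Fin (k+2)) = 1 := by simp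
    ext i j
    refine Fin.cases ?_ (fun i => ?_) i <;> refine Fin.cases ?_ (fun j => ?_) j <;>
      simp [bez, cons0, h1, hsa0, hsas, Fin.cons_succ, Matrix.one_apply, Fin.succ_inj, succ_succ_ne_one, Fin.succ_ne_zero]
  rw [m0, m1, det_cons0, det_cons0, Matrix.det_one]
  have e1 : bez k x y b' a' 0 0 = x := rfl
  have e2 : bez k x y b' a' 0 (0:Fin (k+1)).succ = y := rfl
  rw [e1, e2]
  simp [h0]
  try ring

lemma bez_mulVec (k : ℕ) (x y b' a' a b : ℤ) (w : Fin k → ℤ) :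
    (bez k x y b' a').mulVec (Fin.cons a (Fin.cons b w)) =
      Fin.cons (x*a + y*b) (Fin.cons (-b'*a + a'*b) w) := by
  funext i
  refine Fin.cases ?_ (fun i => ?_) i
  · show ∑ j, bez k x y b' a' 0 j * _ = _
    rw [Fin.sum_univ_succ, Fin.sum_univ_succ]
    simp [bez, Fin.cons_succ]
  · refine Fin.cases ?_ (fun i' => ?_) i
    · show ∑ j, bez k x y b' a' (0:Fin (k+1)).succ j * _ = _
      rw [Fin.sum_univ_succ, Fin.sum_univ_succ]
      simp [bez, Fin.cons_succ]
    · have hrow : ∀ j, bez k x y b' a' i'.succ.succ j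
          = (1 : Matrix (Fin (k+2)) (Fin (k+2)) ℤ) i'.succ.succ j := by
        intro j; simp [bez, Fin.cons_succ]
      show ∑ j, bez k x y b' a' i'.succ.succ j * (Fin.cons a (Fin.cons b w) : Fin (k+2) → ℤ) j
          = (Fin.cons (x*a + y*b) (Fin.cons (-b'*a + a'*b) w) : Fin (k+2) → ℤ) i'.succ.succ
      simp [bez, Fin.cons_succ, Matrix.one_apply, Finset.sum_ite_eq]

lemma cons_cons_zero {k : ℕ} (g : ℤ) :
    (Fin.cons g (Fin.cons (0:ℤ) (0 : Fin k → ℤ)) : Fin (k+2) → ℤ) = Fin.cons g (0 : Fin (k+1) → ℤ) := by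
  funext i
  refine Fin.cases rfl (fun i => ?_) i
  refine Fin.cases ?_ (fun i' => ?_) i <;> simp [Fin.cons_succ]

lemma vec_clear (k : ℕ) (v : Fin (k+1) → ℤ) :
    ∃ (U : Matrix (Fin (k+1)) (Fin (k+1)) ℤ) (g : ℤ), IsUnit U.det ∧ 0 ≤ g ∧
      U.mulVec v = Fin.cons g (0 : Fin k → ℤ) := by
  induction k with
  | zero =>
    by_cases h : 0 ≤ v 0
    · refine ⟨1, v 0, by simp, h, ?_⟩
      funext i
      fin_cases i
      simp [Matrix.one_mulVec]
    · refine ⟨-1, -(v 0), by simp, by omega, ?_⟩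
      funext i
      fin_cases i
      simp [Matrix.neg_mulVec, Matrix.one_mulVec]
  | succ k ih =>
    obtain ⟨V, g', hV, hg', hVv⟩ := ih (fun i => v i.succ)
    have hB : (cons0 1 V).mulVec v = Fin.cons (v 0) (Fin.cons g' (0 : Fin k → ℤ)) := by
      rw [cons0_mulVec, hVv, one_mul]
    have hdetB : IsUnit (cons0 1 V).det := by rw [det_cons0, one_mul]; exact hV
    by_cases h0 : v 0 = 0 ∧ g' = 0
    · refine ⟨cons0 1 V, 0, hdetB, le_refl _, ?_⟩
      rw [hB, h0.1, h0.2, cons_cons_zero]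
    · set gZ : ℤ := (Int.gcd (v 0) g' : ℤ) with hgZ
      have hgpos : 0 < gZ := by
        have : Int.gcd (v 0) g' ≠ 0 := fun hg0 => h0 (Int.gcd_eq_zero_iff.mp hg0)
        omega
      have hdl : gZ ∣ v 0 := Int.gcd_dvd_left _ _
      have hdr : gZ ∣ g' := Int.gcd_dvd_right _ _
      set x := Int.gcdA (v 0) g'
      set y := Int.gcdB (v 0) g'
      have hbez : gZ = v 0 * x + g' * y := Int.gcd_eq_gcd_ab (v 0) g'
      set a' := v 0 / gZ with ha'
      set b' := g' / gZ with hb'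
      have hva : v 0 = gZ * a' := (Int.mul_ediv_cancel' hdl).symm
      have hgb : g' = gZ * b' := (Int.mul_ediv_cancel' hdr).symm
      refine ⟨bez k x y b' a' * cons0 1 V, gZ, ?_, le_of_lt hgpos, ?_⟩
      · rw [Matrix.det_mul, det_bez]
        have h1 : x * a' + y * b' = 1 := by
          have h2 : gZ * (x * a' + y * b') = gZ * 1 := by
            rw [mul_one]
            calc gZ * (x * a' + y * b') = (gZ * a') * x + (gZ * b') * y := by ring
            _ = v 0 * x + g' * y := by rw [← hva, ← hgb]
            _ = gZ := hbez.symm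
          exact mul_left_cancel₀ (ne_of_gt hgpos) h2
        rw [h1, one_mul]
        exact hdetB
      · rw [← Matrix.mulVec_mulVec, hB, bez_mulVec]
        have h1 : x * v 0 + y * g' = gZ := by rw [hbez]; ring
        have h2 : -b' * v 0 + a' * g' = 0 := by rw [hva, hgb]; ring
        rw [h1, h2, cons_cons_zero]


lemma pivot_unique {m n : ℕ} {H : Matrix (Fin m) (Fin n) ℤ} {i : Fin m} {j j' : Fin n}
    (h1 : IsPivot H i j) (h2 : IsPivot H i j') : j = j' := by
  rcases lt_trichotomy j j' with h | h | h
  · exact absurd (h2.2 j h) h1.1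
  · exact h
  · exact absurd (h1.2 j' h) h2.1

lemma transvec_mul_apply {m n : ℕ} (i j a : Fin m) (c : ℤ) (M : Matrix (Fin m) (Fin n) ℤ) (b : Fin n) :
    (Matrix.transvection i j c * M) a b = M a b + (if a = i then c * M j b else 0) := by
  by_cases h : a = i
  · simp [Matrix.transvection, Matrix.add_mul, Matrix.add_apply, Matrix.smul_mul, Matrix.smul_apply, h,
      Matrix.mul_apply, Matrix.single, ite_and, add_mul, Finset.sum_add_distrib,
      Matrix.one_apply, Finset.sum_ite_eq, Finset.sum_ite_eq', eq_comm, ite_mul]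
  · simp only [Matrix.transvection, Matrix.add_mul, Matrix.add_apply, Matrix.smul_mul,
      Matrix.smul_apply, Matrix.one_mul, if_neg h]
    rw [add_right_inj]
    simp only [Matrix.mul_apply, Matrix.single, Matrix.of_apply, ite_and, ite_mul, zero_mul]
    rw [Finset.sum_eq_zero]
    intro x _
    rw [if_neg (fun h' : i = a => h h'.symm)]

lemma reduce_row0 {m n : ℕ} (H : Matrix (Fin (m+1)) (Fin n) ℤ)
    (hpos : ∀ (i : Fin m) (j : Fin n), IsPivot H i.succ j → 0 < H i.succ j)
    (hbelow : ∀ (i : Fin m) (j : Fin n), IsPivot H i.succ j → ∀ i' : Fin m, i < i' → H i'.succ j = 0) :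
    ∃ W : Matrix (Fin (m+1)) (Fin (m+1)) ℤ, IsUnit W.det ∧
      (∀ (i : Fin m) (j : Fin n), (W * H) i.succ j = H i.succ j) ∧
      (∀ j : Fin n, (∀ i : Fin m, H i.succ j = 0) → (W * H) 0 j = H 0 j) ∧
      (∀ (i : Fin m) (j : Fin n), IsPivot H i.succ j → 0 ≤ (W * H) 0 j ∧ (W * H) 0 j < H i.succ j) := by
  have key : ∀ k : ℕ, k ≤ m → ∃ W : Matrix (Fin (m+1)) (Fin (m+1)) ℤ, IsUnit W.det ∧
      (∀ (i : Fin m) (j : Fin n), (W * H) i.succ j = H i.succ j) ∧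
      (∀ j : Fin n, (∀ i : Fin m, H i.succ j = 0) → (W * H) 0 j = H 0 j) ∧
      (∀ i : Fin m, (i : ℕ) < k → ∀ j : Fin n, IsPivot H i.succ j →
        0 ≤ (W * H) 0 j ∧ (W * H) 0 j < H i.succ j) := by
    intro k
    induction k with
    | zero =>
      intro _
      exact ⟨1, by simp, by simp, by simp, fun i hi => absurd hi (by omega)⟩
    | succ k ih =>
      intro hk
      obtain ⟨W, hWu, hWrows, hWcol, hWbnd⟩ := ih (by omega)
      have hkm : k < m := by omega
      set i0 : Fin m := ⟨k, hkm⟩ with hi0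
      by_cases hp : ∃ j, IsPivot H i0.succ j
      · obtain ⟨j0, hj0⟩ := hp
        have hppos : 0 < H i0.succ j0 := hpos _ _ hj0
        have hpne : H i0.succ j0 ≠ 0 := ne_of_gt hppos
        refine ⟨Matrix.transvection 0 i0.succ (-((W * H) 0 j0 / H i0.succ j0)) * W, ?_, ?_, ?_, ?_⟩
        case _ =>
          rw [Matrix.det_mul, Matrix.det_transvection_of_ne _ _ (Ne.symm (Fin.succ_ne_zero i0)) _, one_mul]
          exact hWu
        all_goals
          have hassoc : Matrix.transvection 0 i0.succ (-((W * H) 0 j0 / H i0.succ j0)) * W * H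
              = Matrix.transvection 0 i0.succ (-((W * H) 0 j0 / H i0.succ j0)) * (W * H) :=
            Matrix.mul_assoc _ W H
          have hTrow0 : ∀ j, (Matrix.transvection 0 i0.succ (-((W * H) 0 j0 / H i0.succ j0)) * (W * H)) 0 j
              = (W * H) 0 j + (-((W * H) 0 j0 / H i0.succ j0)) * (W * H) i0.succ j :=
            fun j => by rw [transvec_mul_apply]; simp
          have hTrows : ∀ (i : Fin m) (j : Fin n),
              (Matrix.transvection 0 i0.succ (-((W * H) 0 j0 / H i0.succ j0)) * (W * H)) i.succ j
              = (W * H) i.succ j :=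
            fun i j => by rw [transvec_mul_apply, if_neg (Fin.succ_ne_zero i), add_zero]
        case _ =>
          intro i j
          rw [hassoc, hTrows, hWrows]
        case _ =>
          intro j hz
          rw [hassoc, hTrow0, hWrows, hz i0, hWcol j hz]
          ring
        case _ =>
          intro i hi j hj
          rcases Nat.lt_or_ge (i : ℕ) k with hik | hik
          · have hzero : H i0.succ j = 0 := by
              apply hbelow i j hj i0
              rw [Fin.lt_def]
              exact hik
            rw [hassoc, hTrow0, hWrows, hzero]
            have hb := hWbnd i hik j hj
            constructor
            · linarith [hb.1]
            · linarith [hb.2]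
          · have hii0 : i = i0 := Fin.ext (by simp only [hi0]; omega)
            have hjj0 : j = j0 := pivot_unique (hii0 ▸ hj) hj0
            rw [hii0, hjj0, hassoc, hTrow0, hWrows]
            have hmod : (W * H) 0 j0 + -((W * H) 0 j0 / H i0.succ j0) * H i0.succ j0
                = (W * H) 0 j0 % H i0.succ j0 := by
              rw [Int.emod_def]
              ring
            rw [hmod]
            exact ⟨Int.emod_nonneg _ hpne, Int.emod_lt_of_pos _ hppos⟩
      · refine ⟨W, hWu, hWrows, hWcol, ?_⟩
        intro i hi j hj
        rcases Nat.lt_or_ge (i : ℕ) k with hik | hik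
        · exact hWbnd i hik j hj
        · have hii0 : i = i0 := by
            apply Fin.ext
            simp only [hi0]
            omega
          exact absurd ⟨j, hii0 ▸ hj⟩ hp
  obtain ⟨W, h1, h2, h3, h4⟩ := key m le_rfl
  exact ⟨W, h1, h2, h3, fun i j hj => h4 i i.isLt j hj⟩

lemma mulVec_eq_zero {k : ℕ} (U : Matrix (Fin k) (Fin k) ℤ) (hU : IsUnit U.det)
    (v : Fin k → ℤ) (h : U.mulVec v = 0) : v = 0 := by
  have h2 := congrArg (U⁻¹.mulVec) h
  rwa [Matrix.mulVec_mulVec, Matrix.nonsing_inv_mul U hU, Matrix.one_mulVec,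
    Matrix.mulVec_zero] at h2

theorem main {m n : ℕ} (A : Matrix (Fin m) (Fin n) ℤ) :
    ∃ U : Matrix (Fin m) (Fin m) ℤ, IsUnit U.det ∧ IsHermiteNF (U * A) := by
  induction m with
  | zero => exact ⟨1, by simp, fun i => i.elim0, fun i => i.elim0⟩
  | succ m ih =>
    classical
    by_cases hA : ∀ i j, A i j = 0
    · refine ⟨1, by simp, ?_, ?_⟩
      · intro i j hpiv
        exact absurd (by rw [Matrix.one_mul]; exact hA i j) hpiv.1
      · intro i i' _ _ j
        rw [Matrix.one_mul]
        exact hA i' j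
    · push_neg at hA
      obtain ⟨i₀, j₀', hne⟩ := hA
      set S : Finset (Fin n) := Finset.univ.filter (fun j => ∃ i, A i j ≠ 0) with hSdef
      have hS : S.Nonempty := ⟨j₀', by simp [hSdef]; exact ⟨i₀, hne⟩⟩
      set j0 := S.min' hS with hj0def
      have hj0mem : ∃ i, A i j0 ≠ 0 := by
        have := S.min'_mem hS
        simpa [hSdef] using this
      have hj0min : ∀ j, j < j0 → ∀ i, A i j = 0 := by
        intro j hj i
        by_contra hcon
        have hmem : j ∈ S := by simp [hSdef]; exact ⟨i, hcon⟩
        exact absurd (S.min'_le j hmem) (not_le.mpr hj)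
      obtain ⟨U1, g, hU1, hg0, hU1v⟩ := vec_clear m (fun i => A i j0)
      set B := U1 * A with hB
      have hcolB : ∀ i, B i j0 = (Fin.cons g (0 : Fin m → ℤ) : Fin (m+1) → ℤ) i := by
        intro i
        have h1 : B i j0 = U1.mulVec (fun k => A k j0) i := rfl
        rw [h1, hU1v]
      have hcolBlt : ∀ j, j < j0 → ∀ i, B i j = 0 := by
        intro j hj i
        have h1 : B i j = U1.mulVec (fun k => A k j) i := rfl
        rw [h1]
        have hc : (fun k => A k j) = (0 : Fin (m+1) → ℤ) := funext fun k => hj0min j hj k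
        rw [hc, Matrix.mulVec_zero]
        rfl
      have hg : 0 < g := by
        rcases hg0.lt_or_eq with h | h
        · exact h
        · exfalso
          obtain ⟨i1, hi1⟩ := hj0mem
          have hv0 : U1.mulVec (fun i => A i j0) = 0 := by
            rw [hU1v, ← h]
            funext i
            refine Fin.cases rfl (fun i' => ?_) i
            simp [Fin.cons_succ]
          have hz := mulVec_eq_zero U1 hU1 _ hv0
          exact hi1 (congrFun hz i1)
      set C : Matrix (Fin m) (Fin n) ℤ := Matrix.of (fun i j => B i.succ j) with hC
      obtain ⟨V, hV, hVC⟩ := ih C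
      set D := cons0 1 V * B with hD
      have hD0 : ∀ j, D 0 j = B 0 j := fun j => by rw [hD, cons0_mul_zero, one_mul]
      have hDs : ∀ (i : Fin m) (j : Fin n), D i.succ j = (V * C) i j := by
        intro i j
        rw [hD, cons0_mul_succ, Matrix.mul_apply]
        rfl
      have hDlow : ∀ (i : Fin m) (j : Fin n), j ≤ j0 → D i.succ j = 0 := by
        intro i j hj
        rw [hDs, Matrix.mul_apply]
        apply Finset.sum_eq_zero
        intro l _
        have hz : C l j = 0 := by
          show B l.succ j = 0
          rcases lt_or_eq_of_le hj with h | h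
          · exact hcolBlt j h l.succ
          · rw [h, hcolB l.succ]
            simp [Fin.cons_succ]
        rw [hz, mul_zero]
      have hPivD : ∀ (i : Fin m) (j : Fin n), IsPivot D i.succ j ↔ IsPivot (V*C) i j := by
        intro i j
        simp [IsPivot, hDs]
      obtain ⟨W, hW, hWrows, hWcol, hWbnd⟩ := reduce_row0 D
        (fun i j hpiv => by rw [hDs]; exact (hVC.1 i j ((hPivD i j).mp hpiv)).1)
        (fun i j hpiv i' hii' => by rw [hDs]; exact (hVC.1 i j ((hPivD i j).mp hpiv)).2.2.1 i' hii')
      refine ⟨W * (cons0 1 V * U1), ?_, ?_⟩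
      · rw [Matrix.det_mul, Matrix.det_mul, det_cons0, one_mul]
        exact (hW.mul (hV.mul hU1))
      · have hWD : W * (cons0 1 V * U1) * A = W * D := by
          rw [hD, hB, Matrix.mul_assoc, Matrix.mul_assoc]
        rw [hWD]
        have hErows : ∀ (i : Fin m) (j : Fin n), (W * D) i.succ j = (V * C) i j :=
          fun i j => by rw [hWrows, hDs]
        have hE0low : ∀ j, j < j0 → (W * D) 0 j = 0 := by
          intro j hj
          rw [hWcol j (fun i => hDlow i j (le_of_lt hj)), hD0]
          exact hcolBlt j hj 0
        have hE0j0 : (W * D) 0 j0 = g := by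
          rw [hWcol j0 (fun i => hDlow i j0 le_rfl), hD0, hcolB 0]
          rfl
        have hElow : ∀ (i : Fin m) (j : Fin n), j ≤ j0 → (W * D) i.succ j = 0 :=
          fun i j hj => by rw [hWrows]; exact hDlow i j hj
        have hPivE : ∀ (i : Fin m) (j : Fin n), IsPivot (W * D) i.succ j ↔ IsPivot (V*C) i j := by
          intro i j
          simp [IsPivot, hErows]
        have hPivE0 : IsPivot (W * D) 0 j0 :=
          ⟨by rw [hE0j0]; exact ne_of_gt hg, fun j' hj' => hE0low j' hj'⟩
        constructor
        · intro i j hpiv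
          rcases Fin.eq_zero_or_eq_succ i with rfl | ⟨i', rfl⟩
          · have hjj0 : j = j0 := pivot_unique hpiv hPivE0
            subst hjj0
            refine ⟨by rw [hE0j0]; exact hg, ?_, ?_, ?_⟩
            · intro i' hi'
              exact absurd hi' (Fin.not_lt_zero i')
            · intro i' hi'
              rcases Fin.eq_zero_or_eq_succ i' with rfl | ⟨i'', rfl⟩
              · exact absurd hi' (lt_irrefl 0)
              · exact hElow i'' j0 le_rfl
            · intro i₂ j₂ hlt hpiv2
              rcases Fin.eq_zero_or_eq_succ i₂ with rfl | ⟨i₂', rfl⟩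
              · exact absurd hlt (lt_irrefl 0)
              · by_contra hle
                push_neg at hle
                exact hpiv2.1 (hElow i₂' j₂ hle)
          · have hp' := (hPivE i' j).mp hpiv
            obtain ⟨hpos', habove, hbelow', hstair⟩ := hVC.1 i' j hp'
            refine ⟨by rw [hErows]; exact hpos', ?_, ?_, ?_⟩
            · intro i'' hi''
              rcases Fin.eq_zero_or_eq_succ i'' with rfl | ⟨i''', rfl⟩
              · have hb := hWbnd i' j ((hPivD i' j).mpr hp')
                rw [hWrows]
                exact hb
              · have hlt : i''' < i' := by rwa [Fin.succ_lt_succ_iff] at hi''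
                rw [hErows, hErows]
                exact habove i''' hlt
            · intro i'' hi''
              rcases Fin.eq_zero_or_eq_succ i'' with rfl | ⟨i''', rfl⟩
              · exact absurd hi'' (Fin.not_lt_zero _)
              · rw [hErows]
                exact hbelow' i''' (by rwa [Fin.succ_lt_succ_iff] at hi'')
            · intro i₂ j₂ hlt hpiv2
              rcases Fin.eq_zero_or_eq_succ i₂ with rfl | ⟨i₂', rfl⟩
              · exact absurd hlt (Fin.not_lt_zero _)
              · exact hstair i₂' j₂ (by rwa [Fin.succ_lt_succ_iff] at hlt) ((hPivE i₂' j₂).mp hpiv2)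
        · intro i i' hii' hzero j
          rcases Fin.eq_zero_or_eq_succ i with rfl | ⟨i1, rfl⟩
          · exact absurd (hzero j0) (by rw [hE0j0]; exact ne_of_gt hg)
          · rcases Fin.eq_zero_or_eq_succ i' with rfl | ⟨i2, rfl⟩
            · exact absurd hii' (Fin.not_lt_zero _)
            · rw [hErows]
              exact hVC.2 i1 i2 (by rwa [Fin.succ_lt_succ_iff] at hii')
                (fun j' => by rw [← hErows i1 j']; exact hzero j') j

end HNF

/-- Every integer matrix can be brought into Hermite Normal Form by
left-multiplication by a unimodular matrix. -/
theorem stmt13 (m n : ℕ) (A : Matrix (Fin m) (Fin n) ℤ) :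
    ∃ U : Matrix (Fin m) (Fin m) ℤ, IsUnit U.det ∧ IsHermiteNF (U * A) := HNF.main A
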